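/- Let c₁, c₂, c₃ be nonzero real numbers and a ∈ ℝ satisfying: c₁ + c₂ + c₃ = 3 − a; 1/c₁ + 1/c₂ + 1/c₃ = 3 − a; and (1 − c₁⁴)c₂³c₃³ + (1 − c₂⁴)c₁³c₃³ + (1 − c₃⁴)c₁³c₂³ = 0. If in addition (c₁² − c₂²)(c₂² − c₃²)(c₃² − c₁²) = 0 (i.e. the Jacobian determinant |c₁²−c₂²|·|c₂²−c₃²|·|c₃²−c₁²| / |c₁c₂c₃| of the map Φ(c₁,c₂,c₃) = (c₁+c₂+c₃, 1/c₁+1/c₂+1/c₃, (1−c₁⁴)c₂³c₃³+(1−c₂⁴)c₁³c₃³+(1−c₃⁴)c₁³c₂³) vanishes on this solution set), then |||a||| = 0. Equivalently: for |||a||| ≠ 0 the Jacobian of Φ does not vanish on the solution set Φ(c₁,c₂,c₃) = (3−a, 3−a, 0). -/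

import Mathlib

noncomputable section

/-- `|||α||| = min{|α|, |α−2|, |α−3|, |α−4|, |α−6|}`. -/
def tri (α : ℝ) : ℝ := min |α| (min |α - 2| (min |α - 3| (min |α - 4| |α - 6|)))

lemma sq_cases' {x y : ℝ} (h : x ^ 2 = y ^ 2) : x = y ∨ x = -y := by
  have : (x - y) * (x + y) = 0 := by linear_combination h
  rcases mul_eq_zero.mp this with h' | h'
  · left; linarith
  · right; linarith

lemma anti (c a : ℝ) (hc : c ≠ 0) (H1 : c = 3 - a) (H2 : 1 / c = 3 - a) :
    a = 2 ∨ a = 4 := by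
  have h : (3 - a) ^ 2 = 1 := by
    field_simp at H2
    linear_combination (-1 : ℝ) * H2 - (3 - a) * H1
  have := sq_cases' (y := (1:ℝ)) (by linarith [h] : (3 - a) ^ 2 = 1 ^ 2)
  rcases this with h' | h'
  · left; linarith
  · right; linarith

lemma key (c d a : ℝ) (hc : c ≠ 0) (hd : d ≠ 0)
    (hsum : 2 * c + d = 3 - a) (hrec : 2 / c + 1 / d = 3 - a)
    (hcub : 2 * (1 - c ^ 4) * c ^ 3 * d ^ 3 + (1 - d ^ 4) * c ^ 6 = 0) :
    a = 0 ∨ a = 2 ∨ a = 4 ∨ a = 6 := by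
  have E2 : 2 * d * (c ^ 2 - 1) + c * (d ^ 2 - 1) = 0 := by
    have h := hrec
    field_simp at h
    linear_combination (-1 : ℝ) * h + (c * d) * hsum
  have T : c ^ 3 * (2 * (c ^ 2 - 1) * d * (d ^ 2 - c ^ 2)) = 0 := by
    linear_combination (-1 : ℝ) * hcub - c ^ 5 * (1 + d ^ 2) * E2
  have key2 : 2 * (c ^ 2 - 1) * d * (d ^ 2 - c ^ 2) = 0 :=
    (mul_eq_zero.mp T).resolve_left (pow_ne_zero 3 hc)
  rcases mul_eq_zero.mp key2 with h | h
  · rcases mul_eq_zero.mp h with h' | h'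
    · -- c^2 = 1
      have hc2 : c ^ 2 = 1 := by linarith
      have hd2 : d ^ 2 = 1 := by
        have : c * (d ^ 2 - 1) = 0 := by linear_combination E2 - 2 * d * hc2
        have := (mul_eq_zero.mp this).resolve_left hc
        linarith
      rcases sq_cases' (y := (1:ℝ)) (by linarith : c ^ 2 = 1 ^ 2) with hcv | hcv <;>
      rcases sq_cases' (y := (1:ℝ)) (by linarith : d ^ 2 = 1 ^ 2) with hdv | hdv
      · left; subst hcv; linarith
      · right; left; subst hcv; norm_num at hdv; linarith
      · right; right; left; norm_num at hcv; linarith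
      · right; right; right; norm_num at hcv hdv; linarith
    · exact absurd h' hd
  · -- d^2 = c^2
    rcases sq_cases' (by linarith : d ^ 2 = c ^ 2) with hdc | hdc
    · -- d = c : 3c(c²-1)=0
      have hc2 : c ^ 2 = 1 := by
        have h3 : c * (3 * (c ^ 2 - 1)) = 0 := by
          linear_combination E2 + (2 - c * d - 3 * c ^ 2) * hdc
        have := (mul_eq_zero.mp h3).resolve_left hc
        linarith
      rcases sq_cases' (y := (1:ℝ)) (by linarith : c ^ 2 = 1 ^ 2) with hcv | hcv
      · left; subst hdc; subst hcv; linarith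
      · right; right; right; norm_num at hcv; subst hdc; linarith
    · -- d = -c
      have hc2 : c ^ 2 = 1 := by
        have h3 : c * (c ^ 2 - 1) = 0 := by
          linear_combination (-1 : ℝ) * E2 + (c * d + c ^ 2 - 2) * hdc
        have := (mul_eq_zero.mp h3).resolve_left hc
        linarith
      rcases sq_cases' (y := (1:ℝ)) (by linarith : c ^ 2 = 1 ^ 2) with hcv | hcv
      · right; left; subst hcv; norm_num at hdc; linarith
      · right; right; left; norm_num at hcv; linarith

lemma tri_zero {a : ℝ} (h : a = 0 ∨ a = 2 ∨ a = 4 ∨ a = 6) : tri a = 0 := by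
  rcases h with h | h | h | h <;> subst h <;> norm_num [tri]

/-- If `c₁,c₂,c₃ ≠ 0` solve `Φ(c₁,c₂,c₃) = (3−a, 3−a, 0)` and the Jacobian of `Φ`
vanishes there (i.e. `(c₁²−c₂²)(c₂²−c₃²)(c₃²−c₁²) = 0`), then `|||a||| = 0`. -/
theorem stmt12 (c1 c2 c3 a : ℝ) (h1 : c1 ≠ 0) (h2 : c2 ≠ 0) (h3 : c3 ≠ 0)
    (hsum : c1 + c2 + c3 = 3 - a)
    (hrec : 1 / c1 + 1 / c2 + 1 / c3 = 3 - a)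
    (hcub : (1 - c1 ^ 4) * c2 ^ 3 * c3 ^ 3 + (1 - c2 ^ 4) * c1 ^ 3 * c3 ^ 3 +
        (1 - c3 ^ 4) * c1 ^ 3 * c2 ^ 3 = 0)
    (hjac : (c1 ^ 2 - c2 ^ 2) * (c2 ^ 2 - c3 ^ 2) * (c3 ^ 2 - c1 ^ 2) = 0) :
    tri a = 0 := by
  apply tri_zero
  rcases mul_eq_zero.mp hjac with hj | hj
  · rcases mul_eq_zero.mp hj with hj' | hj'
    · -- c1² = c2²
      rcases sq_cases' (by linarith : c1 ^ 2 = c2 ^ 2) with he | he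
      · subst he
        exact key c1 c3 a h1 h3 (by linarith) (by rw [← hrec]; ring) (by linarith [hcub]; )
      · -- c1 = -c2
        have hs : c3 = 3 - a := by rw [he] at hsum; linarith
        have hr : 1 / c3 = 3 - a := by
          rw [he] at hrec
          have : 1 / (-c2) + 1 / c2 = 0 := by field_simp; ring
          linarith
        rcases anti c3 a h3 hs hr with h | h
        · right; left; exact h
        · right; right; left; exact h
    · -- c2² = c3²
      rcases sq_cases' (by linarith : c2 ^ 2 = c3 ^ 2) with he | he
      · subst he
        exact key c2 c1 a h2 h1 (by linarith) (by rw [← hrec]; ring)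
          (by linear_combination hcub)
      · have hs : c1 = 3 - a := by rw [he] at hsum; linarith
        have hr : 1 / c1 = 3 - a := by
          rw [he] at hrec
          have : 1 / (-c3) + 1 / c3 = 0 := by field_simp; ring
          linarith
        rcases anti c1 a h1 hs hr with h | h
        · right; left; exact h
        · right; right; left; exact h
  · -- c3² = c1²
    rcases sq_cases' (by linarith : c3 ^ 2 = c1 ^ 2) with he | he
    · subst he
      exact key c3 c2 a h3 h2 (by linarith) (by rw [← hrec]; ring)
        (by linear_combination hcub)
    · have hs : c2 = 3 - a := by rw [he] at hsum; linarith
      have hr : 1 / c2 = 3 - a := by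
        rw [he] at hrec
        have : 1 / (-c1) + 1 / c1 = 0 := by field_simp; ring
        linarith
      rcases anti c2 a h2 hs hr with h | h
      · right; left; exact h
      · right; right; left; exact h
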